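/- Let A ∈ ℝ₊^{n×n} be asymptotically balanceable, meaning for every ε > 0 there exists x ∈ ℝ^n such that ‖r(A(x)) - c(A(x))‖₁ / ‖A(x)‖₁ ≤ ε, where A(x)_{ij} = A_{ij} e^{x_i - x_j}, r and c are row- and column-sum vectors, and ‖A(x)‖₁ = ∑_{i,j} A_{ij} e^{x_i - x_j} > 0. Then the zero vector lies in the convex hull of W = {e_i - e_j : A_{ij} > 0}. -/

import Mathlib

/-- If `A` is asymptotically balanceable, then `0` lies in the convex hull of
`W = {e_i - e_j : A_{ij} > 0}`. -/
theorem asymptotically_balanceable_zero_mem_convexHull {n : ℕ} (A : Fin n → Fin n → ℝ)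
    (hA : ∀ i j, 0 ≤ A i j)
    (hbal : ∀ ε : ℝ, 0 < ε → ∃ x : Fin n → ℝ,
      0 < (∑ i, ∑ j, A i j * Real.exp (x i - x j)) ∧
      (∑ ℓ, |(∑ j, A ℓ j * Real.exp (x ℓ - x j)) - ∑ i, A i ℓ * Real.exp (x i - x ℓ)|)
        / (∑ i, ∑ j, A i j * Real.exp (x i - x j)) ≤ ε) :
    (0 : Fin n → ℝ) ∈ convexHull ℝ
      {v : Fin n → ℝ | ∃ i j, 0 < A i j ∧ v = Pi.single i 1 - Pi.single j 1} := by
  set W : Set (Fin n → ℝ) :=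
    {v : Fin n → ℝ | ∃ i j, 0 < A i j ∧ v = Pi.single i 1 - Pi.single j 1} with hW
  -- W is finite, hence its convex hull is closed
  have hWfin : W.Finite := by
    apply Set.Finite.subset (Set.finite_range
      (fun p : Fin n × Fin n => (Pi.single p.1 1 - Pi.single p.2 1 : Fin n → ℝ)))
    rintro v ⟨i, j, -, rfl⟩
    exact ⟨(i, j), rfl⟩
  have hclosed : IsClosed (convexHull ℝ W) := (hWfin.isCompact_convexHull ℝ).isClosed
  have hmem : (0 : Fin n → ℝ) ∈ closure (convexHull ℝ W) := by
    rw [Metric.mem_closure_iff]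
    intro ε hε
    obtain ⟨x, hS, hsum⟩ := hbal (ε / 2) (by linarith)
    set S : ℝ := ∑ i, ∑ j, A i j * Real.exp (x i - x j) with hSdef
    set w : Fin n × Fin n → ℝ := fun p => A p.1 p.2 * Real.exp (x p.1 - x p.2) with hw
    set z : Fin n × Fin n → (Fin n → ℝ) :=
      fun p => Pi.single p.1 1 - Pi.single p.2 1 with hz
    set t : Finset (Fin n × Fin n) := Finset.univ.filter (fun p => 0 < A p.1 p.2) with ht
    have hwzero : ∀ p : Fin n × Fin n, p ∉ t → w p = 0 := by
      intro p hp
      simp only [ht, Finset.mem_filter, Finset.mem_univ, true_and, not_lt] at hp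
      have : A p.1 p.2 = 0 := le_antisymm hp (hA _ _)
      simp [hw, this]
    have hSt : ∑ p ∈ t, w p = S := by
      rw [Finset.sum_subset (Finset.subset_univ t) (fun p _ hp => hwzero p hp)]
      rw [hSdef, ← Finset.sum_product']
      rfl
    have hSpos : (0:ℝ) < ∑ p ∈ t, w p := hSt ▸ hS
    have hb : t.centerMass w z ∈ convexHull ℝ W := by
      apply Finset.centerMass_mem_convexHull
      · intro p _
        exact mul_nonneg (hA _ _) (Real.exp_nonneg _)
      · exact hSpos
      · intro p hp
        simp only [ht, Finset.mem_filter, Finset.mem_univ, true_and] at hp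
        exact ⟨p.1, p.2, hp, rfl⟩
    refine ⟨t.centerMass w z, hb, ?_⟩
    -- compute coordinates of the center of mass
    have hcoord : ∀ ℓ : Fin n, t.centerMass w z ℓ =
        ((∑ j, A ℓ j * Real.exp (x ℓ - x j)) - ∑ i, A i ℓ * Real.exp (x i - x ℓ)) / S := by
      intro ℓ
      rw [Finset.centerMass, hSt]
      have hV : (∑ p ∈ t, w p • z p) = ∑ p : Fin n × Fin n, w p • z p := by
        apply Finset.sum_subset (Finset.subset_univ t)
        intro p _ hp
        rw [hwzero p hp, zero_smul]
      rw [hV]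
      have : ((S⁻¹ : ℝ) • ∑ p : Fin n × Fin n, w p • z p) ℓ =
          S⁻¹ * ∑ p : Fin n × Fin n, w p * (z p ℓ) := by
        simp [Finset.sum_apply]
      rw [this]
      have hzval : ∀ p : Fin n × Fin n, z p ℓ =
          (if ℓ = p.1 then (1:ℝ) else 0) - (if ℓ = p.2 then (1:ℝ) else 0) := by
        intro p
        simp [hz, Pi.single_apply]
      have h1 : ∑ i, ∑ j, (w (i, j) * if ℓ = i then (1:ℝ) else 0)
          = ∑ j, A ℓ j * Real.exp (x ℓ - x j) := by
        rw [Finset.sum_eq_single ℓ]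
        · simp [hw]
        · intro b _ hb
          simp [Ne.symm hb]
        · simp
      have h2 : ∑ i, ∑ j, (w (i, j) * if ℓ = j then (1:ℝ) else 0)
          = ∑ i, A i ℓ * Real.exp (x i - x ℓ) := by
        apply Finset.sum_congr rfl
        intro i _
        rw [Finset.sum_eq_single ℓ]
        · simp [hw]
        · intro b _ hb
          simp [Ne.symm hb]
        · simp
      have hsplit : ∑ p : Fin n × Fin n, w p * (z p ℓ) =
          (∑ j, A ℓ j * Real.exp (x ℓ - x j)) - ∑ i, A i ℓ * Real.exp (x i - x ℓ) := by
        rw [Fintype.sum_prod_type]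
        simp only [hzval, mul_sub]
        simp only [Finset.sum_sub_distrib]
        rw [h1, h2]
      rw [hsplit]
      rw [div_eq_inv_mul]
    rw [dist_comm, dist_zero_right]
    have hnorm : ‖t.centerMass w z‖ ≤ ε / 2 := by
      apply pi_norm_le_iff_of_nonneg (by linarith) |>.2
      intro ℓ
      rw [hcoord, Real.norm_eq_abs, abs_div, abs_of_pos hS]
      refine le_trans ?_ hsum
      gcongr
      exact Finset.single_le_sum (f := fun m =>
        |(∑ j, A m j * Real.exp (x m - x j)) - ∑ i, A i m * Real.exp (x i - x m)|)
        (fun m _ => abs_nonneg _) (Finset.mem_univ ℓ)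
    linarith
  rwa [hclosed.closure_eq] at hmem
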